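/- Let C be a category with all (small) products, B an object of C, and A a set. The endofunctor F(X) = B × X^A on C has a final coalgebra with carrier B^(A*), where A* is the set of finite words over A. The coalgebra structure ω : B^(A*) → B × (B^(A*))^A has first component the projection π_ε and second component, at letter a and word u, the projection π_{au}. -/

import Mathlib

open CategoryTheory CategoryTheory.Limits

/-- Observation maps: behavior of a state on a word. -/
noncomputable def finalObs {C : Type*} [Category C] [HasProducts C] [HasBinaryProducts C]
    {B X : C} {A : Type _} (c : X ⟶ B ⨯ (∏ᶜ (fun _ : A => X))) : List A → (X ⟶ B)
  | [] => c ≫ prod.fst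
  | a :: u => c ≫ prod.snd ≫ Pi.π (fun _ : A => X) a ≫ finalObs c u

/-- Let `C` be a category with all small products, `B : C` and `A` a set.
The endofunctor `F(X) = B × X^A` has a final coalgebra carried by the power
`B^(A*)` (where `A* = List A`), whose structure map `ω` has first component
the projection `π_ε` and second component, at letter `a` and word `u`, the
projection `π_{a·u}`: for every coalgebra `c : X ⟶ B × X^A` there is a
unique coalgebra morphism into `(B^(A*), ω)`. -/
theorem final_coalgebra_of_generalized_automata
    {C : Type*} [Category C] [HasProducts C] [HasBinaryProducts C]
    (B : C) (A : Type _)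
    (Ω : C) (hΩ : Ω = ∏ᶜ (fun _ : List A => B))
    (ω : Ω ⟶ B ⨯ (∏ᶜ (fun _ : A => Ω)))
    (hω : ω = eqToHom hΩ ≫
      prod.lift (Pi.π (fun _ : List A => B) ([] : List A))
        (Pi.lift (fun a : A =>
          (Pi.lift (fun u : List A =>
            Pi.π (fun _ : List A => B) (a :: u))) ≫ eqToHom hΩ.symm))) :
    ∀ (X : C) (c : X ⟶ B ⨯ (∏ᶜ (fun _ : A => X))),
      ∃! h : X ⟶ Ω,
        h ≫ ω = c ≫ prod.map (𝟙 B) (Limits.Pi.map (fun _ : A => h)) := by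
  subst hΩ
  subst hω
  intro X c
  refine ⟨Pi.lift (finalObs c), ?_, ?_⟩
  · apply Limits.prod.hom_ext
    · simp [finalObs]
      erw [prod.lift_fst]
    · apply limit.hom_ext
      intro ⟨a⟩
      apply limit.hom_ext
      intro ⟨u⟩
      simp [finalObs]
      erw [prod.lift_snd_assoc]
      simp [finalObs]
  · intro h hh
    apply limit.hom_ext
    rintro ⟨w⟩
    simp only [limit.lift_π, Fan.mk_π_app]
    induction w generalizing h with
    | nil =>
      have := hh =≫ prod.fst
      simp [finalObs] at this
      erw [prod.lift_fst] at this
      simpa [finalObs] using this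
    | cons a u ih =>
      have h1 := hh =≫ (prod.snd ≫ Pi.π (fun _ : A => ∏ᶜ (fun _ : List A => B)) a)
      simp only [Category.assoc, prod.map_snd_assoc, Category.id_comp] at h1
      -- h ≫ stuff = c ≫ snd ≫ Pi.map ... ≫ π a
      have h2 := h1 =≫ Pi.π (fun _ : List A => B) u
      simp only [Category.assoc, prod.lift_snd_assoc, limit.lift_π, Fan.mk_π_app,
        eqToHom_refl, Category.comp_id, Category.id_comp, limMap_π, Discrete.natTrans_app] at h2 ⊢
      rw [h2, finalObs]
      rw [Pi.map_π_assoc, ih h (by rw [hh])] <;> simp
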